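/- Let G = C₁H₁ where C₁ ∈ ℝ^{K×R} is nonnegative and separable and H₁ ∈ ℝ^{R×m} is nonnegative with rank R. Then for any other factorization G = C₂H₂ in which C₂ ∈ ℝ^{K×R} is nonnegative and separable and H₂ ∈ ℝ^{R×m} is nonnegative with rank R, there exist a permutation matrix Π ∈ ℝ^{R×R} and a diagonal matrix Λ ∈ ℝ^{R×R} with strictly positive diagonal entries such that C₂ = C₁ΠΛ and H₂ = Λ⁻¹Πᵀ H₁. (This is the identifiability content of Theorem 1: under the separability assumption on the PSD matrix and generic spatial loss functions, the factors C and H of the sensed data matrix G = CH are identifiable up to a common permutation and positive diagonal scaling.) -/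

import Mathlib

open Matrix

/-- Cancellation: full row rank matrices can be cancelled on the right. -/
lemma rank_cancel_right {K R m : ℕ} (H : Matrix (Fin R) (Fin m) ℝ) (hrank : H.rank = R)
    (M N : Matrix (Fin K) (Fin R) ℝ) (h : M * H = N * H) : M = N := by
  have hsurj : Function.Surjective H.mulVecLin := by
    rw [← LinearMap.range_eq_top]
    apply Submodule.eq_top_of_finrank_eq
    rw [← Matrix.rank, hrank]
    simp [Module.finrank_pi]
  have hv : ∀ v, M *ᵥ v = N *ᵥ v := by
    intro v
    obtain ⟨w, hw⟩ := hsurj v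
    have h2 := congrArg (fun X => X *ᵥ w) h
    simp only [← Matrix.mulVec_mulVec] at h2
    rw [Matrix.mulVecLin_apply] at hw
    rwa [hw] at h2
  ext i j
  have := congrFun (hv (Pi.single j 1)) i
  simpa using this

/-- A nonnegative matrix with nonnegative (two-sided) inverse is monomial. -/
lemma monomial_of_nonneg_inv {R : ℕ} (A B : Matrix (Fin R) (Fin R) ℝ)
    (hA : ∀ i j, 0 ≤ A i j) (hB : ∀ i j, 0 ≤ B i j)
    (hAB : A * B = 1) (hBA : B * A = 1) :
    ∃ τ : Equiv.Perm (Fin R), ∀ r, 0 < A r (τ r) ∧ ∀ k, k ≠ τ r → A r k = 0 := by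
  -- existence of a positive entry in each row of A (paired with positive B entry)
  have hex : ∀ r : Fin R, ∃ k, 0 < A r k ∧ 0 < B k r := by
    intro r
    by_contra hcon
    push_neg at hcon
    have h1 : (A * B) r r = 1 := by rw [hAB]; simp
    rw [Matrix.mul_apply] at h1
    have h0 : ∀ k ∈ Finset.univ, A r k * B k r = (0 : ℝ) := by
      intro k _
      rcases lt_or_eq_of_le (hA r k) with hpos | heq
      · have := hcon k hpos
        exact mul_eq_zero_of_right _ (le_antisymm this (hB k r))
      · rw [← heq, zero_mul]
    rw [Finset.sum_eq_zero h0] at h1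
    norm_num at h1
  -- the support claim: if A r k > 0 then B k j = 0 for j ≠ r
  have hsupp : ∀ r k j, 0 < A r k → j ≠ r → B k j = 0 := by
    intro r k j hpos hne
    have h0 : (A * B) r j = 0 := by rw [hAB]; simp [Matrix.one_apply, Ne.symm hne]
    rw [Matrix.mul_apply] at h0
    have hterm : A r k * B k j = 0 := by
      have hnn : ∀ i ∈ Finset.univ, 0 ≤ A r i * B i j :=
        fun i _ => mul_nonneg (hA r i) (hB i j)
      have := (Finset.sum_eq_zero_iff_of_nonneg hnn).mp h0 k (Finset.mem_univ k)
      exact this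
    rcases mul_eq_zero.mp hterm with h | h
    · exact absurd h (ne_of_gt hpos)
    · exact h
  -- uniqueness of positive entry per row
  have huniq : ∀ r k k', 0 < A r k → 0 < A r k' → k = k' := by
    intro r k k' hk hk'
    by_contra hne
    -- B row k is supported on {r}, and B k r > 0
    have hBk : ∀ j, j ≠ r → B k j = 0 := fun j hj => hsupp r k j hk hj
    have hBkr : 0 < B k r := by
      have h1 : (B * A) k k = 1 := by rw [hBA]; simp
      rw [Matrix.mul_apply] at h1
      have : (∑ j, B k j * A j k) = B k r * A r k := by
        apply Finset.sum_eq_single_of_mem r (Finset.mem_univ r)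
        intro j _ hj
        rw [hBk j hj, zero_mul]
      rw [this] at h1
      rcases lt_or_eq_of_le (hB k r) with hpos | heq
      · exact hpos
      · rw [← heq, zero_mul] at h1; norm_num at h1
    have h0 : (B * A) k k' = 0 := by rw [hBA]; simp [Matrix.one_apply, hne]
    rw [Matrix.mul_apply] at h0
    have hsum : (∑ j, B k j * A j k') = B k r * A r k' := by
      apply Finset.sum_eq_single_of_mem r (Finset.mem_univ r)
      intro j _ hj
      rw [hBk j hj, zero_mul]
    rw [hsum] at h0
    exact absurd h0 (ne_of_gt (mul_pos hBkr hk'))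
  choose τ hτpos hτB using hex
  have hτinj : Function.Injective τ := by
    intro r r' heq
    by_contra hne
    -- B row (τ r) supported on {r} and on {r'}; hence zero row; contradicts B (τ r) r > 0
    have h1 : B (τ r) r = 0 := by
      have := hsupp r' (τ r') r (hτpos r') hne
      rwa [← heq] at this
    exact absurd h1 (ne_of_gt (hτB r))
  refine ⟨Equiv.ofBijective τ ((Finite.injective_iff_bijective).mp hτinj), fun r => ?_⟩
  refine ⟨hτpos r, fun k hk => ?_⟩
  rcases lt_or_eq_of_le (hA r k) with hpos | heq
  · exact absurd (huniq r k (τ r) hpos (hτpos r)) hk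
  · exact heq.symm

/-- A nonnegative matrix `C ∈ ℝ^{K×R}` is *separable* if for every column `r` there is a
row index `f_r` such that `C f_r r > 0` and `C f_r k = 0` for all `k ≠ r`. -/
def Separable {K R : ℕ} (C : Matrix (Fin K) (Fin R) ℝ) : Prop :=
  ∀ r : Fin R, ∃ f : Fin K, 0 < C f r ∧ ∀ k : Fin R, k ≠ r → C f k = 0

/-- A separable factor extraction: a nonnegative matrix expressing the rows of `H₂` in terms
of rows of `H₁`. -/
lemma exists_nonneg_transfer {K R m : ℕ}
    (C₁ C₂ : Matrix (Fin K) (Fin R) ℝ) (H₁ H₂ : Matrix (Fin R) (Fin m) ℝ)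
    (hC₁nn : ∀ i j, 0 ≤ C₁ i j) (hC₂sep : Separable C₂)
    (hfac : C₁ * H₁ = C₂ * H₂) :
    ∃ A : Matrix (Fin R) (Fin R) ℝ, (∀ i j, 0 ≤ A i j) ∧ H₂ = A * H₁ := by
  choose f hfpos hfzero using hC₂sep
  refine ⟨fun r k => C₁ (f r) k / C₂ (f r) r, fun i j => div_nonneg (hC₁nn _ _) (le_of_lt (hfpos i)), ?_⟩
  ext r j
  have hc : C₂ (f r) r ≠ 0 := ne_of_gt (hfpos r)
  have hG : (C₁ * H₁) (f r) j = (C₂ * H₂) (f r) j := by rw [hfac]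
  rw [Matrix.mul_apply, Matrix.mul_apply] at hG
  have hsum : (∑ k, C₂ (f r) k * H₂ k j) = C₂ (f r) r * H₂ r j := by
    apply Finset.sum_eq_single_of_mem r (Finset.mem_univ r)
    intro k _ hk
    rw [hfzero r k hk, zero_mul]
  rw [hsum] at hG
  show H₂ r j = ∑ k, C₁ (f r) k / C₂ (f r) r * H₁ k j
  have : (∑ k, C₁ (f r) k / C₂ (f r) r * H₁ k j)
      = (∑ k, C₁ (f r) k * H₁ k j) / C₂ (f r) r := by
    rw [Finset.sum_div]
    congr 1; ext k; ring
  rw [this, hG, mul_comm, mul_div_assoc, div_self hc, mul_one]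

/-- Identifiability of separable NMF: if `G = C₁H₁ = C₂H₂` with both `Cᵢ` nonnegative and
separable and both `Hᵢ` nonnegative of rank `R`, then the two factorizations coincide up to a
common permutation and positive diagonal scaling. -/
theorem separable_nmf_identifiability {K R m : ℕ}
    (C₁ C₂ : Matrix (Fin K) (Fin R) ℝ) (H₁ H₂ : Matrix (Fin R) (Fin m) ℝ)
    (hC₁nn : ∀ i j, 0 ≤ C₁ i j) (hC₁sep : Separable C₁)
    (hH₁nn : ∀ i j, 0 ≤ H₁ i j) (hH₁rank : H₁.rank = R)
    (hC₂nn : ∀ i j, 0 ≤ C₂ i j) (hC₂sep : Separable C₂)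
    (hH₂nn : ∀ i j, 0 ≤ H₂ i j) (hH₂rank : H₂.rank = R)
    (hfac : C₁ * H₁ = C₂ * H₂) :
    ∃ (σ : Equiv.Perm (Fin R)) (d : Fin R → ℝ),
      (∀ r, 0 < d r) ∧
      C₂ = C₁ * (σ.toPEquiv.toMatrix : Matrix (Fin R) (Fin R) ℝ) * Matrix.diagonal d ∧
      H₂ = (Matrix.diagonal d)⁻¹ * (σ.toPEquiv.toMatrix : Matrix (Fin R) (Fin R) ℝ).transpose * H₁ := by
  obtain ⟨A, hAnn, hA⟩ := exists_nonneg_transfer C₁ C₂ H₁ H₂ hC₁nn hC₂sep hfac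
  obtain ⟨B, hBnn, hB⟩ := exists_nonneg_transfer C₂ C₁ H₂ H₁ hC₂nn hC₁sep hfac.symm
  have hBA : B * A = 1 := by
    apply rank_cancel_right H₁ hH₁rank
    rw [Matrix.mul_assoc, ← hA, ← hB, Matrix.one_mul]
  have hAB : A * B = 1 := by
    apply rank_cancel_right H₂ hH₂rank
    rw [Matrix.mul_assoc, ← hB, ← hA, Matrix.one_mul]
  obtain ⟨τ, hτ⟩ := monomial_of_nonneg_inv A B hAnn hBnn hAB hBA
  set d : Fin R → ℝ := fun r => (A r (τ r))⁻¹ with hd_def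
  have hd : ∀ r, 0 < d r := fun r => inv_pos.mpr (hτ r).1
  set σ : Equiv.Perm (Fin R) := τ.symm with hσ_def
  set P : Matrix (Fin R) (Fin R) ℝ := σ.toPEquiv.toMatrix with hP_def
  have hPapp : ∀ i j, P i j = if j = τ.symm i then 1 else 0 := by
    intro i j
    simp [hP_def, hσ_def, PEquiv.toMatrix_apply, Equiv.toPEquiv_apply, Option.mem_def, eq_comm]
  have hAPD : A * (P * Matrix.diagonal d) = 1 := by
    ext r s
    rw [Matrix.mul_apply]
    have hs : (∑ k, A r k * (P * Matrix.diagonal d) k s) = A r (τ s) * d s := by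
      rw [Finset.sum_eq_single_of_mem (τ s) (Finset.mem_univ _)]
      · rw [Matrix.mul_diagonal, hPapp]
        simp
      · intro k _ hk
        rw [Matrix.mul_diagonal, hPapp]
        have : ¬ (s = τ.symm k) := by
          intro h; apply hk; rw [h]; simp
        rw [if_neg this]
        ring
    rw [hs]
    rcases eq_or_ne r s with h | h
    · subst h
      rw [Matrix.one_apply_eq, hd_def]
      exact mul_inv_cancel₀ (ne_of_gt (hτ r).1)
    · rw [Matrix.one_apply_ne h, (hτ r).2 (τ s) (fun hc => h (τ.injective hc).symm), zero_mul]
  have hBeq : B = P * Matrix.diagonal d := by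
    calc B = B * (A * (P * Matrix.diagonal d)) := by rw [hAPD, Matrix.mul_one]
    _ = (B * A) * (P * Matrix.diagonal d) := by rw [Matrix.mul_assoc]
    _ = P * Matrix.diagonal d := by rw [hBA, Matrix.one_mul]
  have hC₂eq : C₂ = C₁ * P * Matrix.diagonal d := by
    apply rank_cancel_right H₂ hH₂rank
    rw [← hfac, Matrix.mul_assoc, Matrix.mul_assoc, ← Matrix.mul_assoc P, ← hBeq, ← hB]
  have hinvdiag : (Matrix.diagonal d)⁻¹ = Matrix.diagonal (fun r => A r (τ r)) := by
    apply Matrix.inv_eq_right_inv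
    have h1 : (fun i => d i * A i (τ i)) = fun _ => (1 : ℝ) :=
      funext fun r => inv_mul_cancel₀ (ne_of_gt (hτ r).1)
    rw [Matrix.diagonal_mul_diagonal, h1, Matrix.diagonal_one]
  have hAeq : (Matrix.diagonal d)⁻¹ * P.transpose = A := by
    rw [hinvdiag]
    ext r k
    rw [Matrix.diagonal_mul, Matrix.transpose_apply, hPapp]
    rcases eq_or_ne k (τ r) with h | h
    · subst h; simp
    · rw [if_neg (fun hc : r = τ.symm k => h (by rw [hc]; simp)), mul_zero,
        (hτ r).2 k h]
  exact ⟨σ, d, hd, hC₂eq, by rw [hAeq, ← hA]⟩
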